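/- Define g : (0, 2π) → ℝ by g(θ) = (1/4)·ln(5 − 4cos θ) − 1 + cos θ. Then g(θ) equals the real part of f_0 at the point v = −(1/2)e^{iθ}, i.e. g(θ) = (1/2)·ln|(1 − (1/2)e^{iθ})/((1/2)e^{iθ})| − 1 + cos θ, and for all θ ∈ (0,2π), g'(θ) = −4 sin θ (1 − cos θ)/(5 − 4cos θ). Consequently g is strictly decreasing on (0, π) and strictly increasing on (π, 2π), so along the circle |v| = 1/2 the real part of f_0 attains its maximum at θ = 0 and its minimum at θ = π. -/

import Mathlib

/-- `g(θ) = (1/4)·ln(5 - 4cos θ) - 1 + cos θ`, the real part of the steep descent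
exponent `f₀` along the circle `v = -(1/2)e^{iθ}`. -/
noncomputable def g (θ : ℝ) : ℝ := (1 / 4) * Real.log (5 - 4 * Real.cos θ) - 1 + Real.cos θ

lemma hpos' (θ : ℝ) : 0 < 5 - 4 * Real.cos θ := by nlinarith [Real.cos_le_one θ]

lemma g_hasDeriv (θ : ℝ) :
    HasDerivAt g (-4 * Real.sin θ * (1 - Real.cos θ) / (5 - 4 * Real.cos θ)) θ := by
  have h1 : HasDerivAt (fun t : ℝ => 5 - 4 * Real.cos t) (4 * Real.sin θ) θ := by
    have := ((Real.hasDerivAt_cos θ).const_mul (4:ℝ)).const_sub (5:ℝ)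
    refine this.congr_deriv ?_; ring
  have h3 := (((h1.log (hpos' θ).ne').const_mul ((1:ℝ)/4)).sub_const (1:ℝ)).add
    (Real.hasDerivAt_cos θ)
  refine HasDerivAt.congr_deriv (f := g) h3 ?_
  have := (hpos' θ).ne'
  field_simp
  ring

lemma abs_eq' (θ : ℝ) : ‖
    ((1 - (1 / 2) * Complex.exp (Complex.I * θ)) / ((1 / 2) * Complex.exp (Complex.I * θ)))‖
    = Real.sqrt (5 - 4 * Real.cos θ) := by
  rw [norm_div]
  have he : Complex.exp (Complex.I * θ) = Real.cos θ + Real.sin θ * Complex.I := by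
    rw [mul_comm, Complex.exp_mul_I, Complex.ofReal_cos, Complex.ofReal_sin]
  have hden : ‖(1/2 : ℂ) * Complex.exp (Complex.I * θ)‖ = 1/2 := by
    rw [norm_mul, Complex.norm_exp]; simp
  rw [hden]
  have hnum : ‖1 - (1/2 : ℂ) * Complex.exp (Complex.I * θ)‖
      = Real.sqrt ((5 - 4 * Real.cos θ)/4) := by
    rw [he, Complex.norm_def, Complex.normSq_apply]
    congr 1
    simp [Complex.add_re, Complex.add_im, Complex.cos_ofReal_re, Complex.sin_ofReal_re]
    nlinarith [Real.sin_sq_add_cos_sq θ]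
  rw [hnum, show ((5 - 4 * Real.cos θ)/4 : ℝ) = (5 - 4 * Real.cos θ) * (1/2)^2 by ring,
    Real.sqrt_mul (hpos' θ).le, Real.sqrt_sq (by norm_num : (0:ℝ) ≤ 1/2)]
  ring

lemma cos_lt_one_of_sin_ne (θ : ℝ) (h : Real.sin θ ≠ 0) : Real.cos θ < 1 := by
  nlinarith [Real.sin_sq_add_cos_sq θ, Real.cos_le_one θ, sq_pos_of_ne_zero h]

lemma g_anti : StrictAntiOn g (Set.Icc 0 Real.pi) := by
  apply strictAntiOn_of_deriv_neg (convex_Icc _ _)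
    (fun x _ => (g_hasDeriv x).differentiableAt.continuousAt.continuousWithinAt)
  intro x hx
  rw [interior_Icc] at hx
  rw [(g_hasDeriv x).deriv]
  have hs : 0 < Real.sin x := Real.sin_pos_of_pos_of_lt_pi hx.1 hx.2
  have hc : Real.cos x < 1 := cos_lt_one_of_sin_ne x hs.ne'
  apply div_neg_of_neg_of_pos _ (hpos' x)
  nlinarith

lemma g_mono : StrictMonoOn g (Set.Icc Real.pi (2 * Real.pi)) := by
  apply strictMonoOn_of_deriv_pos (convex_Icc _ _)
    (fun x _ => (g_hasDeriv x).differentiableAt.continuousAt.continuousWithinAt)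
  intro x hx
  rw [interior_Icc] at hx
  rw [(g_hasDeriv x).deriv]
  have hs : Real.sin x < 0 := by
    have h1 : 0 < Real.sin (x - Real.pi) :=
      Real.sin_pos_of_pos_of_lt_pi (by linarith [hx.1]) (by linarith [hx.2])
    rw [Real.sin_sub_pi] at h1; linarith
  have hc : Real.cos x < 1 := cos_lt_one_of_sin_ne x hs.ne
  apply div_pos _ (hpos' x)
  nlinarith

/-- `g(θ)` equals `Re f₀(-(1/2)e^{iθ}) = (1/2)·ln|(1 - (1/2)e^{iθ})/((1/2)e^{iθ})| - 1 + cos θ`,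
its derivative is `g'(θ) = -4 sin θ (1 - cos θ)/(5 - 4cos θ)` on `(0, 2π)`, `g` is strictly
decreasing on `(0, π)` and strictly increasing on `(π, 2π)`, so along the circle `|v| = 1/2`
the real part of `f₀` attains its maximum at `θ = 0` and its minimum at `θ = π`. -/
theorem statement12 :
    (∀ θ ∈ Set.Ioo (0 : ℝ) (2 * Real.pi),
        g θ = (1 / 2) * Real.log (‖
            ((1 - (1 / 2) * Complex.exp (Complex.I * θ)) /
              ((1 / 2) * Complex.exp (Complex.I * θ)))‖) - 1 + Real.cos θ) ∧
    (∀ θ ∈ Set.Ioo (0 : ℝ) (2 * Real.pi),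
        deriv g θ = -4 * Real.sin θ * (1 - Real.cos θ) / (5 - 4 * Real.cos θ)) ∧
    StrictAntiOn g (Set.Ioo 0 Real.pi) ∧
    StrictMonoOn g (Set.Ioo Real.pi (2 * Real.pi)) ∧
    (∀ θ ∈ Set.Ioo (0 : ℝ) (2 * Real.pi), g θ < g 0) ∧
    (∀ θ ∈ Set.Ioo (0 : ℝ) (2 * Real.pi), θ ≠ Real.pi → g Real.pi < g θ) := by
  have hg2pi : g (2 * Real.pi) = g 0 := by
    simp [g, Real.cos_two_pi, Real.cos_zero]
  have hpi := Real.pi_pos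
  refine ⟨?_, ?_, ?_, ?_, ?_, ?_⟩
  · intro θ _
    rw [abs_eq', Real.log_sqrt (hpos' θ).le, g]
    ring
  · intro θ _
    exact (g_hasDeriv θ).deriv
  · exact g_anti.mono Set.Ioo_subset_Icc_self
  · exact g_mono.mono Set.Ioo_subset_Icc_self
  · intro θ hθ
    rcases le_or_gt θ Real.pi with h | h
    · exact g_anti ⟨le_refl 0, hpi.le⟩ ⟨hθ.1.le, h⟩ hθ.1
    · calc g θ < g (2 * Real.pi) :=
            g_mono ⟨h.le, hθ.2.le⟩ ⟨by linarith, le_refl _⟩ hθ.2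
        _ = g 0 := hg2pi
  · intro θ hθ hne
    rcases lt_or_gt_of_ne hne with h | h
    · exact g_anti ⟨hθ.1.le, h.le⟩ ⟨hpi.le, le_refl _⟩ h
    · exact g_mono ⟨le_refl _, by linarith⟩ ⟨h.le, hθ.2.le⟩ h
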